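/- Let X be a compactum (a compact perfect metric space with more than one point), let n ≥ 2 be an integer, and let f : X → X be a continuous map. Then F_n(f) is multi-transitive if and only if SF_n(f) is multi-transitive; moreover, if F_n(f) is multi-transitive, then f is multi-transitive. -/

import Mathlib

open Metric Set TopologicalSpace

variable (X : Type*) [MetricSpace X] (n : ℕ)

/-- The `n`-fold symmetric product `F_n(X)`: nonempty subsets of `X` with at most `n`
points, as a subspace of the nonempty compact subsets of `X` with the Hausdorff metric. -/
abbrev Fn := {A : NonemptyCompacts X // (A : Set X).Finite ∧ (A : Set X).ncard ≤ n}

/-- The induced map `F_n(f)` on the `n`-fold symmetric product, `A ↦ f(A)`. -/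
noncomputable def FnMap (f : X → X) : Fn X n → Fn X n := fun A =>
  ⟨⟨⟨f '' (A.1 : Set X), (A.2.1.image f).isCompact⟩, A.1.nonempty.image f⟩,
    A.2.1.image f, le_trans (Set.ncard_image_le A.2.1) A.2.2⟩

/-- `F_1(X) ⊆ F_n(X)`: the set of singletons. -/
def F1 : Set (Fn X n) := {A | ∃ x : X, (A.1 : Set X) = {x}}

/-- The setoid collapsing `F_1(X)` to a point. -/
def SFnSetoid : Setoid (Fn X n) where
  r A B := A = B ∨ (A ∈ F1 X n ∧ B ∈ F1 X n)
  iseqv := by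
    refine ⟨fun _ => Or.inl rfl, fun h => h.imp Eq.symm And.symm, fun h₁ h₂ => ?_⟩
    rcases h₁ with rfl | h₁
    · exact h₂
    · rcases h₂ with rfl | h₂
      · exact Or.inr h₁
      · exact Or.inr ⟨h₁.1, h₂.2⟩

/-- The `n`-fold symmetric product suspension `SF_n(X) = F_n(X)/F_1(X)`,
with the quotient topology. -/
abbrev SFn := Quotient (SFnSetoid X n)

/-- The quotient map `q : F_n(X) → SF_n(X)`. -/
def SFnQ : Fn X n → SFn X n := Quotient.mk (SFnSetoid X n)

/-- The induced map `SF_n(f)` on the suspension, with `SF_n(f) ∘ q = q ∘ F_n(f)`. -/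
noncomputable def SFnMap (f : X → X) : SFn X n → SFn X n :=
  Quotient.lift (fun A => SFnQ X n (FnMap X n f A))
    (fun A B h => Quotient.sound (by
      rcases h with rfl | ⟨⟨x, hx⟩, ⟨y, hy⟩⟩
      · exact Or.inl rfl
      · exact Or.inr ⟨⟨f x, by simp [FnMap, hx]⟩, ⟨f y, by simp [FnMap, hy]⟩⟩))

/-- The metric `ρ` on `SF_n(X)`:
`ρ(χ₁,χ₂) = H(F_1(X) ∪ q⁻¹(χ₁), F_1(X) ∪ q⁻¹(χ₂))` where `H` is the Hausdorff
distance between subsets of `F_n(X)`. -/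
noncomputable def SFnDist : SFn X n → SFn X n → ℝ := fun a b =>
  Metric.hausdorffDist (F1 X n ∪ SFnQ X n ⁻¹' {a}) (F1 X n ∪ SFnQ X n ⁻¹' {b})

/-- `g` is (topologically) transitive. -/
def TransitiveMap {Z : Type*} [TopologicalSpace Z] (g : Z → Z) : Prop :=
  ∀ U V : Set Z, IsOpen U → IsOpen V → U.Nonempty → V.Nonempty →
    ∃ k : ℕ, 0 < k ∧ (g^[k] '' U ∩ V).Nonempty

/-- `g` is multi-transitive: for every `m ≥ 1` the map
`g × g² × ⋯ × g^m : Z^m → Z^m` is transitive. -/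
def MultiTransitive {Z : Type*} [TopologicalSpace Z] (g : Z → Z) : Prop :=
  ∀ m : ℕ, 0 < m →
    TransitiveMap (fun z : Fin m → Z => fun i => g^[(i : ℕ) + 1] (z i))

section Aux

variable {X : Type*} [MetricSpace X] {n : ℕ}

theorem FnMap_iterate (f : X → X) (k : ℕ) (A : Fn X n) :
    (((FnMap X n f)^[k] A).1 : Set X) = f^[k] '' (A.1 : Set X) := by
  induction k with
  | zero => simp
  | succ k ih =>
      rw [Function.iterate_succ_apply' (FnMap X n f)]
      show f '' (((FnMap X n f)^[k] A).1 : Set X) = _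
      rw [ih, Function.iterate_succ', Set.image_comp]

theorem SFnQ_eq_iff {A B : Fn X n} :
    SFnQ X n A = SFnQ X n B ↔ A = B ∨ (A ∈ F1 X n ∧ B ∈ F1 X n) :=
  ⟨fun h => Quotient.exact h, fun h => Quotient.sound h⟩

theorem SFnMap_iterate (f : X → X) (k : ℕ) (A : Fn X n) :
    (SFnMap X n f)^[k] (SFnQ X n A) = SFnQ X n ((FnMap X n f)^[k] A) := by
  induction k generalizing A with
  | zero => rfl
  | succ k ih =>
      rw [Function.iterate_succ_apply, Function.iterate_succ_apply]
      exact ih (FnMap X n f A)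

theorem isClosed_F1 : IsClosed (F1 X n) := by
  rw [← isOpen_compl_iff, Metric.isOpen_iff]
  intro A hA
  obtain ⟨x, hx⟩ := A.1.nonempty
  have hxy : ∃ y ∈ (A.1 : Set X), y ≠ x := by
    by_contra h
    push_neg at h
    exact hA ⟨x, Set.eq_singleton_iff_unique_mem.mpr ⟨hx, h⟩⟩
  obtain ⟨y, hy, hyx⟩ := hxy
  have hd : 0 < dist y x := dist_pos.mpr hyx
  refine ⟨dist y x / 3, by positivity, fun B hB => ?_⟩
  rw [Metric.mem_ball, Subtype.dist_eq, NonemptyCompacts.dist_eq] at hB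
  have fin : EMetric.hausdorffEdist (B.1 : Set X) (A.1 : Set X) ≠ ⊤ :=
    Metric.hausdorffEdist_ne_top_of_nonempty_of_bounded B.1.nonempty A.1.nonempty
      B.1.isCompact.isBounded A.1.isCompact.isBounded
  obtain ⟨x', hx', hxx'⟩ := Metric.exists_dist_lt_of_hausdorffDist_lt' hx hB fin
  obtain ⟨y', hy', hyy'⟩ := Metric.exists_dist_lt_of_hausdorffDist_lt' hy hB fin
  rintro ⟨z, hz⟩
  rw [hz, Set.mem_singleton_iff] at hx' hy'
  have h0 : dist y' x' = 0 := by rw [hx', hy', dist_self]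
  have h3 : dist y x ≤ dist y y' + dist y' x' + dist x' x := dist_triangle4 y y' x' x
  rw [h0, dist_comm y y'] at h3
  linarith

noncomputable def pairFn (hn : 2 ≤ n) (x y : X) : Fn X n :=
  ⟨⟨⟨{x, y}, ((Set.finite_singleton y).insert x).isCompact⟩, ⟨x, Set.mem_insert x {y}⟩⟩,
    (Set.finite_singleton y).insert x,
    le_trans (le_trans (Set.ncard_insert_le x {y}) (by simp)) hn⟩

theorem pairFn_coe (hn : 2 ≤ n) (x y : X) : ((pairFn hn x y).1 : Set X) = {x, y} := rfl

theorem dense_compl_F1 (hX : Perfect (Set.univ : Set X)) (hn : 2 ≤ n)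
    {W : Set (Fn X n)} (hW : IsOpen W) (hWne : W.Nonempty) :
    ∃ B ∈ W, B ∉ F1 X n := by
  obtain ⟨A, hA⟩ := hWne
  by_cases hAF : A ∈ F1 X n
  · obtain ⟨x, hx⟩ := hAF
    obtain ⟨ε, hε, hball⟩ := Metric.isOpen_iff.mp hW A hA
    have hacc := hX.2 x (Set.mem_univ x)
    obtain ⟨y, hy, hyx⟩ := accPt_iff_nhds.mp hacc (Metric.ball x ε)
      (Metric.ball_mem_nhds x hε)
    have hyd : dist y x < ε := Metric.mem_ball.mp hy.1
    refine ⟨pairFn hn x y, hball ?_, ?_⟩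
    · rw [Metric.mem_ball, Subtype.dist_eq, NonemptyCompacts.dist_eq, pairFn_coe, hx]
      refine lt_of_le_of_lt (Metric.hausdorffDist_le_of_mem_dist dist_nonneg ?_ ?_) hyd
      · rintro z (rfl | rfl)
        · exact ⟨z, rfl, by rw [dist_self]; exact dist_nonneg⟩
        · exact ⟨x, rfl, le_rfl⟩
      · rintro z rfl
        exact ⟨z, Set.mem_insert z {y}, by rw [dist_self]; exact dist_nonneg⟩
    · rintro ⟨z, hz⟩
      rw [pairFn_coe] at hz
      have h1 : x = z := by
        have hxm : x ∈ ({x, y} : Set X) := Set.mem_insert x {y}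
        rw [hz] at hxm; exact hxm
      have h2 : y = z := by
        have hym : y ∈ ({x, y} : Set X) := Set.mem_insert_of_mem x rfl
        rw [hz] at hym; exact hym
      exact hyx (h2.trans h1.symm)
  · exact ⟨A, hA, hAF⟩

theorem isOpen_SFnQ_image {W : Set (Fn X n)} (hW : IsOpen W)
    (hWF : ∀ A ∈ W, A ∉ F1 X n) : IsOpen (SFnQ X n '' W) := by
  letI : Setoid (Fn X n) := SFnSetoid X n
  have hpre : SFnQ X n ⁻¹' (SFnQ X n '' W) = W := by
    ext A
    constructor
    · rintro ⟨B, hB, hBA⟩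
      rcases SFnQ_eq_iff.mp hBA with rfl | ⟨hBF, -⟩
      · exact hB
      · exact absurd hBF (hWF B hB)
    · exact fun hA => ⟨A, hA, rfl⟩
  have : IsOpen (Quotient.mk' ⁻¹' (SFnQ X n '' W) : Set (Fn X n)) := by
    rw [show (Quotient.mk' : Fn X n → SFn X n) = SFnQ X n from rfl, hpre]
    exact hW
  exact isQuotientMap_quotient_mk'.isOpen_preimage.mp this

theorem semiconj_iterate {Y Z : Type*} (p : Y → Z) (F : Y → Y) (G : Z → Z)
    (h : ∀ y, G (p y) = p (F y)) (k : ℕ) (y : Y) : G^[k] (p y) = p (F^[k] y) := by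
  induction k generalizing y with
  | zero => rfl
  | succ k ih => rw [Function.iterate_succ_apply, Function.iterate_succ_apply, h, ih]

theorem transitive_factor {Y Z : Type*} [TopologicalSpace Y] [TopologicalSpace Z]
    (p : Y → Z) (hc : Continuous p) (hs : Function.Surjective p)
    (F : Y → Y) (G : Z → Z) (h : ∀ y, G (p y) = p (F y)) (hF : TransitiveMap F) :
    TransitiveMap G := by
  intro U V hU hV hUne hVne
  obtain ⟨u, hu⟩ := hUne
  obtain ⟨v, hv⟩ := hVne
  obtain ⟨u', rfl⟩ := hs u
  obtain ⟨v', rfl⟩ := hs v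
  obtain ⟨k, hk, y, ⟨w, hw, rfl⟩, hyV⟩ := hF (p ⁻¹' U) (p ⁻¹' V) (hU.preimage hc)
    (hV.preimage hc) ⟨u', hu⟩ ⟨v', hv⟩
  exact ⟨k, hk, p (F^[k] w), ⟨p w, hw, semiconj_iterate p F G h k w⟩, hyV⟩

theorem exists_box {m : ℕ} {Y : Type*} [TopologicalSpace Y] {U : Set (Fin m → Y)}
    (hU : IsOpen U) {z : Fin m → Y} (hz : z ∈ U) :
    ∃ W : Fin m → Set Y, (∀ i, IsOpen (W i)) ∧ (∀ i, z i ∈ W i) ∧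
      Set.pi Set.univ W ⊆ U := by
  obtain ⟨I, u, hu, hsub⟩ := isOpen_pi_iff.mp hU z hz
  refine ⟨fun i => if i ∈ I then u i else Set.univ, fun i => ?_, fun i => ?_, fun w hw => ?_⟩
  · by_cases hi : i ∈ I
    · simpa [hi] using (hu i hi).1
    · simp [hi]
  · by_cases hi : i ∈ I
    · simpa [hi] using (hu i hi).2
    · simp [hi]
  · apply hsub
    intro i hi
    have := hw i (Set.mem_univ i)
    rw [Finset.mem_coe] at hi
    simpa [hi] using this

theorem isOpen_hat {U : Set X} (hU : IsOpen U) :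
    IsOpen {A : Fn X n | (A.1 : Set X) ⊆ U} := by
  rw [Metric.isOpen_iff]
  intro A hA
  obtain ⟨δ, hδ, hth⟩ := A.1.isCompact.exists_thickening_subset_open hU hA
  refine ⟨δ, hδ, fun B hB => ?_⟩
  rw [Metric.mem_ball, Subtype.dist_eq, NonemptyCompacts.dist_eq] at hB
  intro x hx
  have fin : EMetric.hausdorffEdist (B.1 : Set X) (A.1 : Set X) ≠ ⊤ :=
    Metric.hausdorffEdist_ne_top_of_nonempty_of_bounded B.1.nonempty A.1.nonempty
      B.1.isCompact.isBounded A.1.isCompact.isBounded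
  obtain ⟨y, hy, hxy⟩ := Metric.exists_dist_lt_of_hausdorffDist_lt hx hB fin
  exact hth (Metric.mem_thickening_iff.mpr ⟨y, hy, hxy⟩)

theorem pi_iter {m : ℕ} {Z : Type*} (g : Z → Z) (k : ℕ) (z : Fin m → Z) (i : Fin m) :
    (fun z : Fin m → Z => fun i => g^[(i : ℕ) + 1] (z i))^[k] z i
      = g^[k * ((i : ℕ) + 1)] (z i) := by
  induction k generalizing z with
  | zero => simp
  | succ k ih =>
      rw [Function.iterate_succ_apply, ih]
      show g^[k * ((i:ℕ)+1)] (g^[(i:ℕ)+1] (z i)) = _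
      rw [← Function.iterate_add_apply]
      congr 1
      ring

end Aux
theorem stmt8 (X : Type*) [MetricSpace X] [CompactSpace X] [Nontrivial X]
    (hX : Perfect (Set.univ : Set X))
    (n : ℕ) (hn : 2 ≤ n) (f : X → X) (hf : Continuous f) :
    (MultiTransitive (FnMap X n f) ↔ MultiTransitive (SFnMap X n f)) ∧
    (MultiTransitive (FnMap X n f) → MultiTransitive f) := by
  have forward : MultiTransitive (FnMap X n f) → MultiTransitive (SFnMap X n f) := by
    intro hF m hm
    letI : Setoid (Fn X n) := SFnSetoid X n
    refine transitive_factor (fun z : Fin m → Fn X n => fun i => SFnQ X n (z i))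
      (continuous_pi fun i => continuous_quotient_mk'.comp (continuous_apply i))
      (fun χ => ⟨fun i => (χ i).out, funext fun i => Quotient.out_eq (χ i)⟩)
      _ _ (fun z => funext fun i => SFnMap_iterate f ((i : ℕ) + 1) (z i)) (hF m hm)
  have reverse : MultiTransitive (SFnMap X n f) → MultiTransitive (FnMap X n f) := by
    intro hS m hm U V hU hV hUne hVne
    obtain ⟨zU, hzU⟩ := hUne
    obtain ⟨zV, hzV⟩ := hVne
    obtain ⟨WU, hWUo, hWUz, hWUsub⟩ := exists_box hU hzU
    obtain ⟨WV, hWVo, hWVz, hWVsub⟩ := exists_box hV hzV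
    have hshrink : ∀ (W : Fin m → Set (Fn X n)), (∀ i, IsOpen (W i)) →
        (∀ i, (W i).Nonempty) →
        ∃ W' : Fin m → Set (Fn X n), (∀ i, IsOpen (W' i)) ∧ (∀ i, (W' i).Nonempty) ∧
          (∀ i, W' i ⊆ W i) ∧ (∀ i, ∀ A ∈ W' i, A ∉ F1 X n) := by
      intro W hWo hWne
      choose B hB hBF using fun i => dense_compl_F1 hX hn (hWo i) (hWne i)
      exact ⟨fun i => W i ∩ (F1 X n)ᶜ,
        fun i => (hWo i).inter isClosed_F1.isOpen_compl,
        fun i => ⟨B i, hB i, hBF i⟩,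
        fun i => Set.inter_subset_left,
        fun i A hA => hA.2⟩
    obtain ⟨WU', hU'o, hU'ne, hU'sub, hU'F⟩ := hshrink WU hWUo fun i => ⟨zU i, hWUz i⟩
    obtain ⟨WV', hV'o, hV'ne, hV'sub, hV'F⟩ := hshrink WV hWVo fun i => ⟨zV i, hWVz i⟩
    choose BU hBU using hU'ne
    choose BV hBV using hV'ne
    obtain ⟨k, hk, χ', ⟨χ, hχU, rfl⟩, hχV⟩ := hS m hm
      (Set.pi Set.univ fun i => SFnQ X n '' WU' i)
      (Set.pi Set.univ fun i => SFnQ X n '' WV' i)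
      (isOpen_set_pi Set.finite_univ fun i _ => isOpen_SFnQ_image (hU'o i) (hU'F i))
      (isOpen_set_pi Set.finite_univ fun i _ => isOpen_SFnQ_image (hV'o i) (hV'F i))
      ⟨fun i => SFnQ X n (BU i), fun i _ => ⟨BU i, hBU i, rfl⟩⟩
      ⟨fun i => SFnQ X n (BV i), fun i _ => ⟨BV i, hBV i, rfl⟩⟩
    choose A hA hqA using fun i => hχU i (Set.mem_univ i)
    have key : ∀ i : Fin m, (FnMap X n f)^[k * ((i : ℕ) + 1)] (A i) ∈ WV' i := by
      intro i
      have h1 := hχV i (Set.mem_univ i)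
      rw [pi_iter (SFnMap X n f) k χ i, ← hqA i, SFnMap_iterate] at h1
      obtain ⟨B, hB, hqB⟩ := h1
      rcases SFnQ_eq_iff.mp hqB with rfl | ⟨hBF, -⟩
      · exact hB
      · exact absurd hBF (hV'F i B hB)
    refine ⟨k, hk,
      (fun z : Fin m → Fn X n => fun i => (FnMap X n f)^[(i : ℕ) + 1] (z i))^[k] A,
      ⟨A, hWUsub fun i _ => hU'sub i (hA i), rfl⟩,
      hWVsub fun i _ => ?_⟩
    rw [pi_iter (FnMap X n f) k A i]
    exact hV'sub i (key i)
  have partC : MultiTransitive (FnMap X n f) → MultiTransitive f := by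
    intro hF m hm U V hU hV hUne hVne
    obtain ⟨zU, hzU⟩ := hUne
    obtain ⟨zV, hzV⟩ := hVne
    obtain ⟨WU, hWUo, hWUz, hWUsub⟩ := exists_box hU hzU
    obtain ⟨WV, hWVo, hWVz, hWVsub⟩ := exists_box hV hzV
    obtain ⟨k, hk, w', ⟨w, hw, rfl⟩, hwV⟩ := hF m hm
      (Set.pi Set.univ fun i => {A : Fn X n | (A.1 : Set X) ⊆ WU i})
      (Set.pi Set.univ fun i => {A : Fn X n | (A.1 : Set X) ⊆ WV i})
      (isOpen_set_pi Set.finite_univ fun i _ => isOpen_hat (hWUo i))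
      (isOpen_set_pi Set.finite_univ fun i _ => isOpen_hat (hWVo i))
      ⟨fun i => pairFn hn (zU i) (zU i), fun i _ => by
        rw [Set.mem_setOf_eq, pairFn_coe]
        rintro t (rfl | rfl) <;> exact hWUz i⟩
      ⟨fun i => pairFn hn (zV i) (zV i), fun i _ => by
        rw [Set.mem_setOf_eq, pairFn_coe]
        rintro t (rfl | rfl) <;> exact hWVz i⟩
    choose x hx using fun i => (w i).1.nonempty
    refine ⟨k, hk, (fun z : Fin m → X => fun i => f^[(i : ℕ) + 1] (z i))^[k] x,
      ⟨x, hWUsub fun i _ => hw i (Set.mem_univ i) (hx i), rfl⟩,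
      hWVsub fun i _ => ?_⟩
    rw [pi_iter f k x i]
    have h1 := hwV i (Set.mem_univ i)
    rw [Set.mem_setOf_eq, pi_iter (FnMap X n f) k w i, FnMap_iterate] at h1
    exact h1 ⟨x i, hx i, rfl⟩
  exact ⟨⟨forward, reverse⟩, partC⟩
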